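/- For a positive random variable X with finite first moment and 0 < α ≤ 1/2, one has E[|⟨X⟩^α − X^α|^{1/α}] ≤ (1/α)·⟨X⟩^{1−α}·(⟨X⟩^α − ⟨X^α⟩), where ⟨X⟩ denotes E[X]. -/

import Mathlib

open MeasureTheory

section QJ
open Real

lemma qj_superadd {x y p : ℝ} (hx : 0 ≤ x) (hy : 0 ≤ y) (hp : 1 ≤ p) :
    x ^ p + y ^ p ≤ (x + y) ^ p := by
  have hxy : 0 ≤ x + y := by linarith
  have h1 : x ^ p ≤ x * (x + y) ^ (p - 1) := by
    rcases eq_or_lt_of_le hx with h | h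
    · simp [← h, Real.zero_rpow (by linarith : p ≠ 0)]
    · calc x ^ p = x ^ (1 + (p-1)) := by ring_nf
        _ = x ^ (1:ℝ) * x ^ (p-1) := Real.rpow_add h 1 (p-1)
        _ = x * x ^ (p-1) := by rw [Real.rpow_one]
        _ ≤ x * (x + y) ^ (p-1) :=
          mul_le_mul_of_nonneg_left (Real.rpow_le_rpow hx (by linarith) (by linarith)) hx
  have h2 : y ^ p ≤ y * (x + y) ^ (p - 1) := by
    rcases eq_or_lt_of_le hy with h | h
    · simp [← h, Real.zero_rpow (by linarith : p ≠ 0)]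
    · calc y ^ p = y ^ (1 + (p-1)) := by ring_nf
        _ = y ^ (1:ℝ) * y ^ (p-1) := Real.rpow_add h 1 (p-1)
        _ = y * y ^ (p-1) := by rw [Real.rpow_one]
        _ ≤ y * (x + y) ^ (p-1) :=
          mul_le_mul_of_nonneg_left (Real.rpow_le_rpow hy (by linarith) (by linarith)) hy
  calc x ^ p + y ^ p ≤ (x + y) * (x + y) ^ (p - 1) := by linarith [h1, h2]; 
    _ = (x + y) ^ (p - 1) * (x+y) ^ (1:ℝ) := by rw [Real.rpow_one]; ring
    _ = (x + y) ^ p := by rw [← Real.rpow_add' hxy (by linarith)]; ring_nf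

lemma qj_contin (p : ℝ) (hp : 0 ≤ p) : Continuous (fun x : ℝ => x ^ p) := by
  rw [continuous_iff_continuousAt]
  exact fun x => Real.continuousAt_rpow_const x p (Or.inr hp)

lemma qj_key2 {γ : ℝ} (hγ : 2 ≤ γ) {v : ℝ} (hv : 0 ≤ v) :
    v ^ γ + γ * v + 1 ≤ (1 + v) ^ γ := by
  set F : ℝ → ℝ := fun v => (1 + v) ^ γ - v ^ γ - γ * v - 1 with hF
  have hderiv : ∀ x : ℝ, 0 < x →
      HasDerivAt F (γ * (1 + x) ^ (γ - 1) - γ * x ^ (γ - 1) - γ) x := by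
    intro x hx
    have h1 : HasDerivAt (fun y : ℝ => (1 + y) ^ γ) (γ * (1 + x) ^ (γ - 1)) x := by
      have := (Real.hasDerivAt_rpow_const (x := 1 + x) (p := γ) (Or.inl (by linarith))).comp x
        ((hasDerivAt_id x).const_add 1)
      exact this.congr_deriv (by ring)
    have h2 : HasDerivAt (fun y : ℝ => y ^ γ) (γ * x ^ (γ - 1)) x :=
      Real.hasDerivAt_rpow_const (Or.inl hx.ne')
    have h3 : HasDerivAt (fun y : ℝ => γ * y) γ x := by
      simpa using (hasDerivAt_id x).const_mul γ
    exact ((h1.sub h2).sub h3).sub_const 1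
  have hmono : MonotoneOn F (Set.Ici 0) := by
    apply monotoneOn_of_deriv_nonneg (convex_Ici 0)
    · exact (((((qj_contin γ (by linarith)).comp (continuous_const.add continuous_id)).sub
        (qj_contin γ (by linarith))).sub (continuous_const.mul continuous_id)).sub
        continuous_const).continuousOn
    · intro x hx
      rw [interior_Ici] at hx
      exact ((hderiv x hx).differentiableAt).differentiableWithinAt
    · intro x hx
      rw [interior_Ici] at hx
      rw [(hderiv x hx).deriv]
      have := qj_superadd (le_of_lt hx) (zero_le_one) (by linarith : (1:ℝ) ≤ γ - 1)
      rw [Real.one_rpow] at this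
      have h4 : x ^ (γ-1) + 1 ≤ (1 + x) ^ (γ-1) := by rwa [add_comm x 1] at this
      nlinarith [this, (by linarith : (0:ℝ) < γ)]
  have h0 : F 0 = 0 := by
    simp [hF, Real.zero_rpow (by linarith : γ ≠ 0)]
  have := hmono (Set.self_mem_Ici) (Set.mem_Ici.mpr hv) hv
  rw [h0] at this
  simp only [hF] at this
  linarith

lemma qj_key1 {γ : ℝ} (hγ : 2 ≤ γ) {w : ℝ} (hw0 : 0 ≤ w) (hw1 : w ≤ 1) :
    w ^ γ + 1 ≤ γ * w + (1 - w) ^ γ := by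
  set G : ℝ → ℝ := fun w => γ * w + (1 - w) ^ γ - w ^ γ - 1 with hG
  have hderiv : ∀ x : ℝ, 0 < x → x < 1 →
      HasDerivAt G (γ - γ * (1 - x) ^ (γ - 1) - γ * x ^ (γ - 1)) x := by
    intro x hx hx1
    have h1 : HasDerivAt (fun y : ℝ => (1 - y) ^ γ) (-(γ * (1 - x) ^ (γ - 1))) x := by
      have := (Real.hasDerivAt_rpow_const (x := 1 - x) (p := γ) (Or.inl (by linarith))).comp x
        ((hasDerivAt_id x).const_sub 1)
      exact this.congr_deriv (by ring)
    have h2 : HasDerivAt (fun y : ℝ => y ^ γ) (γ * x ^ (γ - 1)) x :=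
      Real.hasDerivAt_rpow_const (Or.inl hx.ne')
    have h3 : HasDerivAt (fun y : ℝ => γ * y) γ x := by
      simpa using (hasDerivAt_id x).const_mul γ
    have := ((h3.add h1).sub h2).sub_const 1
    exact this.congr_deriv (by ring)
  have hmono : MonotoneOn G (Set.Icc 0 1) := by
    apply monotoneOn_of_deriv_nonneg (convex_Icc 0 1)
    · exact ((continuous_const.mul continuous_id).add
        ((qj_contin γ (by linarith)).comp (continuous_const.sub continuous_id)) |>.sub
        (qj_contin γ (by linarith)) |>.sub continuous_const).continuousOn
    · intro x hx
      rw [interior_Icc] at hx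
      exact ((hderiv x hx.1 hx.2).differentiableAt).differentiableWithinAt
    · intro x hx
      rw [interior_Icc] at hx
      obtain ⟨hxa, hxb⟩ := hx
      rw [(hderiv x hxa hxb).deriv]
      have e1 : x ^ (γ-1) ≤ x :=
        (Real.rpow_le_rpow_of_exponent_ge hxa hxb.le (by linarith)).trans_eq (Real.rpow_one x)
      have e2 : (1-x) ^ (γ-1) ≤ 1 - x :=
        (Real.rpow_le_rpow_of_exponent_ge (by linarith) (by linarith) (by linarith)).trans_eq
          (Real.rpow_one _)
      nlinarith [(by linarith : (0:ℝ) < γ)]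
  have h0 : G 0 = 0 := by
    simp [hG, Real.zero_rpow (by linarith : γ ≠ 0)]
  have := hmono (Set.mem_Icc.mpr ⟨le_refl 0, zero_le_one⟩) (Set.mem_Icc.mpr ⟨hw0, hw1⟩) hw0
  rw [h0] at this
  simp only [hG] at this
  linarith

lemma qj_hom {γ : ℝ} (hγ : 2 ≤ γ) {a c : ℝ} (ha : 0 < a) (hc : 0 < c) :
    |c - a| ^ γ ≤ γ * c ^ (γ - 1) * (c - a) + (a ^ γ - c ^ γ) := by
  have hcg : c ^ γ = c ^ (γ - 1) * c := by
    rw [← Real.rpow_add_one hc.ne']; ring_nf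
  have hcγpos : 0 < c ^ γ := Real.rpow_pos_of_pos hc γ
  have hc1pos : 0 < c ^ (γ - 1) := Real.rpow_pos_of_pos hc (γ - 1)
  rcases le_total a c with h | h
  · -- a ≤ c : use qj_key1 with w = (c - a)/c
    have hw0 : 0 ≤ (c - a)/c := div_nonneg (by linarith) hc.le
    have hw1 : (c - a)/c ≤ 1 := by rw [div_le_one hc]; linarith
    have key := qj_key1 hγ hw0 hw1
    have e1 : ((c - a)/c) ^ γ * c ^ γ = (c - a) ^ γ := by
      rw [← Real.mul_rpow hw0 hc.le, div_mul_cancel₀]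
      exact hc.ne'
    have e2 : (1 - (c - a)/c) = a / c := by field_simp; ring
    have e3 : (a/c) ^ γ * c ^ γ = a ^ γ := by
      rw [← Real.mul_rpow (div_nonneg ha.le hc.le) hc.le, div_mul_cancel₀]
      exact hc.ne'
    rw [e2] at key
    have := mul_le_mul_of_nonneg_right key hcγpos.le
    rw [abs_of_nonneg (by linarith : (0:ℝ) ≤ c - a)]
    rw [add_mul, add_mul, e1, e3] at this
    -- this : (c-a)^γ + c^γ ≤ γ * ((c-a)/c) * c^γ + a^γ
    have e4 : γ * ((c - a)/c) * c ^ γ = γ * c ^ (γ - 1) * (c - a) := by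
      rw [hcg]; field_simp
    rw [e4] at this
    linarith
  · -- c ≤ a : use qj_key2 with v = (a - c)/c
    have hv : 0 ≤ (a - c)/c := div_nonneg (by linarith) hc.le
    have key := qj_key2 hγ hv
    have e1 : ((a - c)/c) ^ γ * c ^ γ = (a - c) ^ γ := by
      rw [← Real.mul_rpow hv hc.le, div_mul_cancel₀]
      exact hc.ne'
    have e2 : (1 + (a - c)/c) = a / c := by field_simp; ring
    have e3 : (a/c) ^ γ * c ^ γ = a ^ γ := by
      rw [← Real.mul_rpow (div_nonneg ha.le hc.le) hc.le, div_mul_cancel₀]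
      exact hc.ne'
    rw [e2] at key
    have := mul_le_mul_of_nonneg_right key hcγpos.le
    rw [abs_of_nonpos (by linarith : c - a ≤ 0)]
    rw [add_mul, add_mul, one_mul, e1, e3] at this
    have e4 : γ * ((a - c)/c) * c ^ γ = γ * c ^ (γ - 1) * (a - c) := by
      rw [hcg]; field_simp
    rw [e4] at this
    have : (a - c) ^ γ ≤ a ^ γ - γ * c ^ (γ - 1) * (a - c) - c ^ γ := by linarith
    calc (-(c - a)) ^ γ = (a - c) ^ γ := by ring_nf
      _ ≤ a ^ γ - γ * c ^ (γ - 1) * (a - c) - c ^ γ := this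
      _ = γ * c ^ (γ - 1) * (c - a) + (a ^ γ - c ^ γ) := by ring

lemma qj_pointwise {α : ℝ} (hα : 0 < α) (hα2 : α ≤ 1/2) {x m : ℝ} (hx : 0 < x) (hm : 0 < m) :
    |m ^ α - x ^ α| ^ (1/α) ≤ (1/α) * m ^ (1 - α) * (m ^ α - x ^ α) + (x - m) := by
  set γ := 1/α with hγdef
  have hγ : 2 ≤ γ := by rw [hγdef, le_div_iff₀ hα]; linarith
  have ha : (0:ℝ) < x ^ α := Real.rpow_pos_of_pos hx α
  have hc : (0:ℝ) < m ^ α := Real.rpow_pos_of_pos hm α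
  have h := qj_hom hγ ha hc
  have hαγ : α * γ = 1 := by rw [hγdef]; field_simp
  have e1 : (m ^ α) ^ (γ - 1) = m ^ (1 - α) := by
    rw [← Real.rpow_mul hm.le]
    congr 1
    have : α * (γ - 1) = α * γ - α := by ring
    rw [this, hαγ]
  have e2 : (x ^ α) ^ γ = x := by
    rw [← Real.rpow_mul hx.le, hαγ, Real.rpow_one]
  have e3 : (m ^ α) ^ γ = m := by
    rw [← Real.rpow_mul hm.le, hαγ, Real.rpow_one]
  rw [e1, e2, e3] at h
  calc |m ^ α - x ^ α| ^ (1/α) = |m ^ α - x ^ α| ^ γ := by rw [hγdef]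
    _ ≤ γ * m ^ (1 - α) * (m ^ α - x ^ α) + (x - m) := by linarith
    _ = (1/α) * m ^ (1 - α) * (m ^ α - x ^ α) + (x - m) := by rw [hγdef]


end QJ

/-- Quantitative Jensen inequality: for a positive integrable random variable `X`
and `0 < α ≤ 1/2`,
`E[|⟨X⟩^α − X^α|^{1/α}] ≤ (1/α)·⟨X⟩^{1−α}·(⟨X⟩^α − ⟨X^α⟩)`. -/
theorem stmt_0 {Ω : Type*} [MeasurableSpace Ω] (μ : Measure Ω) [IsProbabilityMeasure μ]
    (X : Ω → ℝ) (hXm : Measurable X) (hXpos : ∀ᵐ ω ∂μ, 0 < X ω)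
    (hX : Integrable X μ)
    (α : ℝ) (hα : 0 < α) (hα2 : α ≤ 1/2)
    (hIntα : Integrable (fun ω => X ω ^ α) μ)
    (hInt : Integrable (fun ω => |(∫ x, X x ∂μ) ^ α - X ω ^ α| ^ (1/α)) μ) :
    ∫ ω, |(∫ x, X x ∂μ) ^ α - X ω ^ α| ^ (1/α) ∂μ ≤
      (1/α) * (∫ x, X x ∂μ) ^ (1 - α) * ((∫ x, X x ∂μ) ^ α - ∫ ω, X ω ^ α ∂μ) := by
  set m := ∫ x, X x ∂μ with hmdef
  have hm : 0 < m := by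
    rw [hmdef]
    rw [integral_pos_iff_support_of_nonneg_ae (hXpos.mono fun ω h => h.le) hX]
    have : {ω | 0 < X ω} ⊆ Function.support X := fun ω h => ne_of_gt h
    calc (0:ENNReal) < 1 := by norm_num
      _ = μ Set.univ := (measure_univ).symm
      _ = μ {ω | 0 < X ω} := by
          refine (measure_congr ?_).symm
          filter_upwards [hXpos] with ω h
          exact eq_true h
      _ ≤ μ (Function.support X) := measure_mono this
  have h1 : Integrable (fun ω => (1/α) * m ^ (1-α) * (m ^ α - X ω ^ α)) μ := by
    simpa using ((integrable_const (m ^ α)).sub hIntα).const_mul ((1/α) * m ^ (1-α))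
  have h2 : Integrable (fun ω => X ω - m) μ := by
    exact hX.sub (integrable_const m)
  have hRHSint : Integrable
      (fun ω => (1/α) * m ^ (1-α) * (m ^ α - X ω ^ α) + (X ω - m)) μ := h1.add h2
  have hmono := integral_mono_ae hInt hRHSint
    (hXpos.mono fun ω hω => qj_pointwise hα hα2 hω hm)
  refine hmono.trans_eq ?_
  rw [integral_add h1 h2,
    MeasureTheory.integral_const_mul,
    integral_sub (integrable_const (m ^ α)) hIntα,
    integral_sub hX (integrable_const m),
    integral_const]
  simp [← hmdef]
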